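/- Let P = {p_1, ..., p_t} be a finite set of primes with t ≥ 2, A the set of positive integers with all prime factors in P, and F(k) the smallest positive integer not representable as a sum of at most k elements of A. Then for every ε > 0 there is a constant C depending only on ε such that F(k) ≤ C·(kt)^{(1+ε)kt} for all k > 1. -/

import Mathlib

/-- `a` is a positive integer all of whose prime factors lie in `P`. -/
def InA (P : Finset ℕ) (a : ℕ) : Prop :=
  0 < a ∧ ∀ p : ℕ, p.Prime → p ∣ a → p ∈ P

/-- `n` is a sum of at most `k` elements of the set `A` attached to `P`. -/
def RepA (P : Finset ℕ) (k n : ℕ) : Prop :=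
  ∃ L : List ℕ, L.length ≤ k ∧ (∀ a ∈ L, InA P a) ∧ L.sum = n

/-- `F(k)`: the smallest positive integer not representable as a sum of at
most `k` elements of `A`. -/
noncomputable def Fk (P : Finset ℕ) (k : ℕ) : ℕ :=
  sInf {n : ℕ | 0 < n ∧ ¬ RepA P k n}

open Finset
open scoped Classical

/-- Counting smooth numbers up to `N`. -/
lemma smooth_card_le (P : Finset ℕ) (hP : ∀ p ∈ P, p.Prime) (N : ℕ) :
    ((Finset.Icc 1 N).filter (fun a => InA P a)).card ≤ (Nat.log 2 N + 1) ^ P.card := by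
  classical
  have hinj : Set.InjOn (fun a : ℕ => fun p : P => a.factorization (p : ℕ))
      (((Finset.Icc 1 N).filter (fun a => InA P a) : Finset ℕ) : Set ℕ) := by
    intro a ha b hb hab
    simp only [mem_coe, mem_filter, Finset.mem_Icc] at ha hb
    have ha0 : a ≠ 0 := by omega
    have hb0 : b ≠ 0 := by omega
    apply Nat.factorization_inj ha0 hb0
    ext r
    by_cases hr : r ∈ P
    · exact congrFun hab ⟨r, hr⟩
    · by_cases hrp : r.Prime
      · rw [Nat.factorization_eq_zero_of_not_dvd, Nat.factorization_eq_zero_of_not_dvd]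
        · exact fun hd => hr (hb.2.2 r hrp hd)
        · exact fun hd => hr (ha.2.2 r hrp hd)
      · rw [Nat.factorization_eq_zero_of_not_prime _ hrp,
          Nat.factorization_eq_zero_of_not_prime _ hrp]
  have hmaps : ∀ a ∈ (Finset.Icc 1 N).filter (fun a => InA P a),
      (fun p : P => a.factorization (p : ℕ)) ∈
        Fintype.piFinset (fun _ : P => Finset.range (Nat.log 2 N + 1)) := by
    intro a ha
    simp only [mem_filter, Finset.mem_Icc] at ha
    rw [Fintype.mem_piFinset]
    intro p
    rw [Finset.mem_range, Nat.lt_succ_iff, Nat.le_log_iff_pow_le one_lt_two (by omega)]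
    calc 2 ^ a.factorization (p : ℕ) ≤ (p : ℕ) ^ a.factorization (p : ℕ) :=
          Nat.pow_le_pow_left (hP p p.2).two_le _
      _ ≤ a := Nat.le_of_dvd (by omega) (Nat.ordProj_dvd a p)
      _ ≤ N := ha.1.2
  calc ((Finset.Icc 1 N).filter (fun a => InA P a)).card
      ≤ (Fintype.piFinset (fun _ : P => Finset.range (Nat.log 2 N + 1))).card :=
        Finset.card_le_card_of_injOn _ hmaps hinj
    _ = (Nat.log 2 N + 1) ^ P.card := by
        rw [Fintype.card_piFinset]
        simp [Fintype.card_coe]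

lemma sum_getD (L : List ℕ) : ∀ k, L.length ≤ k →
    ∑ i ∈ Finset.range k, L.getD i 0 = L.sum := by
  induction L with
  | nil => intro k _; simp
  | cons a T ih =>
    intro k hk
    cases k with
    | zero => simp at hk
    | succ k =>
      rw [Finset.sum_range_succ']
      simp only [List.getD_cons_succ, List.getD_cons_zero, List.sum_cons]
      rw [ih k (by simpa using hk)]
      omega

/-- Counting representable numbers up to `N`. -/
lemma rep_card_le (P : Finset ℕ) (hP : ∀ p ∈ P, p.Prime) (k N : ℕ) :
    ((Finset.Icc 1 N).filter (fun n => RepA P k n)).card ≤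
      ((Nat.log 2 N + 1) ^ P.card + 1) ^ k := by
  classical
  set S : Finset ℕ := (Finset.Icc 1 N).filter (fun a => InA P a) with hS
  have key : ∀ n ∈ (Finset.Icc 1 N).filter (fun n => RepA P k n), RepA P k n := by
    intro n hn; exact (Finset.mem_filter.mp hn).2
  set f : ℕ → (Fin k → ℕ) := fun n =>
    if h : RepA P k n then (fun i => (h.choose).getD i 0) else fun _ => 0 with hf
  have hmaps : ∀ n ∈ (Finset.Icc 1 N).filter (fun n => RepA P k n),
      f n ∈ Fintype.piFinset (fun _ : Fin k => insert 0 S) := by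
    intro n hn
    simp only [mem_filter, Finset.mem_Icc] at hn
    obtain ⟨⟨hn1, hnN⟩, hr⟩ := hn
    rw [Fintype.mem_piFinset]
    intro i
    simp only [hf, dif_pos hr]
    obtain ⟨hlen, hmem, hsum⟩ := hr.choose_spec
    set L := hr.choose
    by_cases hi : (i : ℕ) < L.length
    · have hmemL : L.getD i 0 ∈ L := by
        rw [List.getD_eq_getElem L 0 hi]
        exact List.getElem_mem hi
      have hInA := hmem _ hmemL
      refine Finset.mem_insert_of_mem ?_
      rw [hS, Finset.mem_filter, Finset.mem_Icc]
      refine ⟨⟨hInA.1, ?_⟩, hInA⟩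
      calc L.getD i 0 ≤ L.sum := List.single_le_sum (fun x _ => Nat.zero_le x) _ hmemL
        _ = n := hsum
        _ ≤ N := hnN
    · rw [List.getD_eq_default L 0 (by omega)]
      exact Finset.mem_insert_self 0 _
  have hinj : Set.InjOn f ((Finset.Icc 1 N).filter (fun n => RepA P k n)) := by
    intro a ha b hb hab
    have hsumf : ∀ m, RepA P k m → ∑ i : Fin k, f m i = m := by
      intro m hm
      simp only [hf, dif_pos hm]
      obtain ⟨hlen, _, hsum⟩ := hm.choose_spec
      rw [Fin.sum_univ_eq_sum_range (fun i => (hm.choose).getD i 0) k,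
        sum_getD _ k hlen, hsum]
    have h1 := hsumf a (key a ha)
    have h2 := hsumf b (key b hb)
    rw [← h1, ← h2, hab]
  calc ((Finset.Icc 1 N).filter (fun n => RepA P k n)).card
      ≤ (Fintype.piFinset (fun _ : Fin k => insert 0 S)).card :=
        Finset.card_le_card_of_injOn f hmaps hinj
    _ = (insert 0 S).card ^ k := by
        rw [Fintype.card_piFinset]; simp
    _ ≤ (S.card + 1) ^ k := Nat.pow_le_pow_left (Finset.card_insert_le 0 S) k
    _ ≤ ((Nat.log 2 N + 1) ^ P.card + 1) ^ k := by
        apply Nat.pow_le_pow_left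
        have h := smooth_card_le P hP N
        rw [← hS] at h
        omega

lemma Fk_le_of_count (P : Finset ℕ) (hP : ∀ p ∈ P, p.Prime) (k N : ℕ)
    (h : ((Nat.log 2 N + 1) ^ P.card + 1) ^ k < N) : Fk P k ≤ N := by
  classical
  have hcard : ((Finset.Icc 1 N).filter (fun n => RepA P k n)).card < (Finset.Icc 1 N).card := by
    have := rep_card_le P hP k N
    rw [Nat.card_Icc]
    omega
  obtain ⟨n, hn, hnr⟩ : ∃ n ∈ Finset.Icc 1 N, ¬ RepA P k n := by
    by_contra hc
    push_neg at hc
    have : (Finset.Icc 1 N).filter (fun n => RepA P k n) = Finset.Icc 1 N :=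
      Finset.filter_eq_self.mpr hc
    rw [this] at hcard
    exact lt_irrefl _ hcard
  rw [Finset.mem_Icc] at hn
  calc Fk P k ≤ n := Nat.sInf_le ⟨by omega, hnr⟩
    _ ≤ N := hn.2

lemma sq_le_two_pow {n : ℕ} (hn : 4 ≤ n) : n ^ 2 ≤ 2 ^ n := by
  induction n with
  | zero => omega
  | succ m ih =>
    rcases Nat.lt_or_ge m 4 with hm | hm
    · interval_cases m <;> simp_all <;> omega
    · have h1 := ih (by omega)
      have h2 : 2 * m + 1 ≤ m ^ 2 := by nlinarith
      calc (m + 1) ^ 2 = m ^ 2 + (2 * m + 1) := by ring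
        _ ≤ 2 ^ m + 2 ^ m := by omega
        _ = 2 ^ (m + 1) := by rw [pow_succ]; ring

/-- Key combinatorial bound: if `2(ktD+1) ≤ 2^D` then `F(k) ≤ 2^(ktD)`. -/
lemma Fk_le_pow (P : Finset ℕ) (hP : ∀ p ∈ P, p.Prime) (ht : 2 ≤ P.card)
    (k D : ℕ) (hk : 1 ≤ k) (hD : 2 * (k * P.card * D + 1) ≤ 2 ^ D) :
    Fk P k ≤ 2 ^ (k * P.card * D) := by
  set t := P.card
  set m := k * t with hm
  apply Fk_le_of_count P hP
  rw [Nat.log_pow one_lt_two]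
  have h1 : (m * D + 1) ^ t + 1 < 2 ^ (D * t) := by
    have hb : (m * D + 1) ^ t + 1 ≤ 2 * (m * D + 1) ^ t := by
      have : 1 ≤ (m * D + 1) ^ t := Nat.one_le_pow _ _ (by omega)
      omega
    have hc : 2 * (m * D + 1) ^ t < 4 * (m * D + 1) ^ t := by
      have : 1 ≤ (m * D + 1) ^ t := Nat.one_le_pow _ _ (by omega)
      omega
    have hd : 4 * (m * D + 1) ^ t ≤ 2 ^ t * (m * D + 1) ^ t := by
      apply Nat.mul_le_mul_right
      calc (4:ℕ) = 2 ^ 2 := rfl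
        _ ≤ 2 ^ t := Nat.pow_le_pow_right (by norm_num) ht
    have he : 2 ^ t * (m * D + 1) ^ t = (2 * (m * D + 1)) ^ t := (mul_pow 2 _ t).symm
    have hf : (2 * (m * D + 1)) ^ t ≤ (2 ^ D) ^ t := Nat.pow_le_pow_left hD t
    have hg : (2 ^ D) ^ t = 2 ^ (D * t) := (pow_mul 2 D t).symm
    omega
  calc ((m * D + 1) ^ t + 1) ^ k < (2 ^ (D * t)) ^ k :=
        Nat.pow_lt_pow_left h1 (by omega)
    _ = 2 ^ (D * t * k) := (pow_mul 2 (D * t) k).symm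
    _ = 2 ^ (m * D) := by rw [hm]; ring_nf

theorem stmt_4 (P : Finset ℕ) (hP : ∀ p ∈ P, p.Prime) (ht : 2 ≤ P.card)
    (ε : ℝ) (hε : 0 < ε) :
    ∃ C : ℝ, 0 < C ∧ ∀ k : ℕ, 1 < k →
      (Fk P k : ℝ) ≤ C * ((k * P.card : ℕ) : ℝ) ^ ((1 + ε) * (k * P.card : ℕ)) := by
  set t := P.card with htdef
  set q : ℕ := max 1 ⌈3 / ε⌉₊ with hqdef
  have hq1 : 1 ≤ q := le_max_left 1 _
  have hq3 : 3 ≤ ε * q := by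
    have h1 : (3 / ε : ℝ) ≤ (⌈3 / ε⌉₊ : ℕ) := Nat.le_ceil _
    have h2 : ((⌈3 / ε⌉₊ : ℕ) : ℝ) ≤ (q : ℝ) := by
      exact_mod_cast Nat.cast_le.mpr (le_max_right 1 _)
    have h3 : (3 / ε : ℝ) ≤ q := le_trans h1 h2
    calc (3:ℝ) = ε * (3 / ε) := by field_simp
      _ ≤ ε * q := by exact mul_le_mul_of_nonneg_left h3 hε.le
  set M₀ : ℕ := 2 ^ (q * (2 * q + 1)) with hM₀
  refine ⟨1 + ∑ i ∈ Finset.range (M₀ + 1), (Fk P i : ℝ), by positivity, ?_⟩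
  set C : ℝ := 1 + ∑ i ∈ Finset.range (M₀ + 1), (Fk P i : ℝ) with hCdef
  have hC1 : 1 ≤ C := by
    rw [hCdef]
    have : (0:ℝ) ≤ ∑ i ∈ Finset.range (M₀ + 1), (Fk P i : ℝ) := by positivity
    linarith
  intro k hk
  set m : ℕ := k * t with hmdef
  have hm4 : 4 ≤ m := by
    calc 4 = 2 * 2 := rfl
      _ ≤ k * t := Nat.mul_le_mul hk ht
  have hexp0 : (0:ℝ) ≤ (1 + ε) * ((m : ℕ) : ℝ) :=
    mul_nonneg (by linarith) (Nat.cast_nonneg m)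
  have hRHS0 : (0:ℝ) ≤ ((m : ℕ) : ℝ) ^ ((1 + ε) * (m : ℕ)) :=
    Real.rpow_nonneg (Nat.cast_nonneg m) _
  have hRHS1 : (1:ℝ) ≤ ((m : ℕ) : ℝ) ^ ((1 + ε) * (m : ℕ)) := by
    calc (1:ℝ) = (1:ℝ) ^ ((1 + ε) * (m : ℕ)) := (Real.one_rpow _).symm
      _ ≤ ((m : ℕ) : ℝ) ^ ((1 + ε) * (m : ℕ)) := by
          apply Real.rpow_le_rpow zero_le_one
          · exact_mod_cast Nat.one_le_cast.mpr (show 1 ≤ m by omega)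
          · exact hexp0
  rcases Nat.lt_or_ge m M₀ with hsmall | hbig
  · -- small case: absorb into the constant
    have hkm : k ≤ m := by
      calc k = k * 1 := (Nat.mul_one k).symm
        _ ≤ k * t := Nat.mul_le_mul_left k (by omega)
    have hmem : k ∈ Finset.range (M₀ + 1) := Finset.mem_range.mpr (by omega)
    have hle : (Fk P k : ℝ) ≤ ∑ i ∈ Finset.range (M₀ + 1), (Fk P i : ℝ) :=
      Finset.single_le_sum (f := fun i => (Fk P i : ℝ)) (fun i _ => Nat.cast_nonneg _) hmem
    calc (Fk P k : ℝ) ≤ C := by rw [hCdef]; linarith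
      _ = C * 1 := (mul_one C).symm
      _ ≤ C * ((m : ℕ) : ℝ) ^ ((1 + ε) * (m : ℕ)) := by
          apply mul_le_mul_of_nonneg_left hRHS1 (by linarith)
  · -- large case
    set L : ℕ := Nat.log 2 m with hLdef
    have hm0 : m ≠ 0 := by omega
    have hL0 : q * (2 * q + 1) ≤ L := by
      rw [hLdef, Nat.le_log_iff_pow_le one_lt_two hm0]
      exact hbig
    set j : ℕ := L / q with hjdef
    have hj : 2 * q + 1 ≤ j := by
      rw [hjdef, Nat.le_div_iff_mul_le (by omega)]
      calc (2 * q + 1) * q = q * (2 * q + 1) := by ring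
        _ ≤ L := hL0
    have hj3 : 3 ≤ j := by omega
    set D : ℕ := L + j + 3 with hDdef
    have hLq : L < (j + 1) * q := by
      have h1 : q * (L / q) + L % q = L := Nat.div_add_mod L q
      have h2 : L % q < q := Nat.mod_lt _ (by omega)
      have h3 : (j + 1) * q = q * (L / q) + q := by rw [hjdef]; ring
      linarith
    -- the combinatorial condition
    have hDle : D ≤ 2 ^ (j + 1) := by
      have h1 : D + 1 ≤ (q + 2) * (j + 1) := by nlinarith
      have h2 : (q + 2) * (j + 1) ≤ (j + 1) * (j + 1) :=
        Nat.mul_le_mul_right _ (by omega)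
      have h3 : (j + 1) * (j + 1) ≤ 2 ^ (j + 1) := by
        have := sq_le_two_pow (n := j + 1) (by omega)
        nlinarith
      omega
    have hm2 : m + 1 ≤ 2 ^ (L + 1) := Nat.lt_pow_succ_log_self one_lt_two m
    have hcond : 2 * (m * D + 1) ≤ 2 ^ D := by
      have e1 : 2 * (m * D + 1) ≤ 2 * D * (m + 1) := by nlinarith
      have e2 : 2 * D * (m + 1) ≤ 2 * D * 2 ^ (L + 1) :=
        Nat.mul_le_mul_left _ hm2
      have e3 : 2 * D * 2 ^ (L + 1) ≤ 2 * 2 ^ (j + 1) * 2 ^ (L + 1) :=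
        Nat.mul_le_mul_right _ (Nat.mul_le_mul_left 2 hDle)
      have e4 : 2 * 2 ^ (j + 1) * 2 ^ (L + 1) = 2 ^ D := by
        rw [hDdef]; ring
      omega
    have hFk : Fk P k ≤ 2 ^ (m * D) := by
      have := Fk_le_pow P hP ht k D (by omega) (by rw [← hmdef]; exact hcond)
      rw [← hmdef] at this
      exact this
    -- real comparison
    have hbase : ((2 ^ L : ℕ) : ℝ) ≤ (m : ℝ) := by
      have : 2 ^ L ≤ m := by rw [hLdef]; exact Nat.pow_log_le_self 2 hm0
      exact_mod_cast this
    have hqjL : (q : ℝ) * (j : ℝ) ≤ (L : ℝ) := by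
      have : q * j ≤ L := by
        rw [hjdef, mul_comm]
        exact Nat.div_mul_le_self L q
      exact_mod_cast this
    have hexp : (D : ℝ) ≤ (1 + ε) * (L : ℝ) := by
      have hDcast : (D : ℝ) = (L : ℝ) + (j : ℝ) + 3 := by
        rw [hDdef]; push_cast; ring
      have hj3' : (3 : ℝ) ≤ (j : ℝ) := by exact_mod_cast hj3
      have hq1' : (1 : ℝ) ≤ (q : ℝ) := by exact_mod_cast hq1
      have key : (j : ℝ) + 3 ≤ ε * (L : ℝ) := by
        have h1 : ε * ((q : ℝ) * (j : ℝ)) ≤ ε * (L : ℝ) :=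
          mul_le_mul_of_nonneg_left hqjL hε.le
        have h2 : ε * ((q : ℝ) * (j : ℝ)) = (ε * q) * j := by ring
        nlinarith
      linarith
    clear_value t q M₀ C m L j D
    have hcast : ((2 ^ (m * D) : ℕ) : ℝ) ≤ ((m : ℕ) : ℝ) ^ ((1 + ε) * (m : ℕ)) := by
      have h2L : (0:ℝ) ≤ ((2 ^ L : ℕ) : ℝ) := Nat.cast_nonneg _
      have hmD : ((m * D : ℕ) : ℝ) ≤ (L : ℝ) * ((1 + ε) * (m : ℕ)) := by
        push_cast
        calc (m:ℝ) * D ≤ (m:ℝ) * ((1 + ε) * L) :=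
              mul_le_mul_of_nonneg_left hexp (Nat.cast_nonneg m)
          _ = (L:ℝ) * ((1 + ε) * m) := by ring
      calc ((2 ^ (m * D) : ℕ) : ℝ) = (2 : ℝ) ^ ((m * D : ℕ) : ℝ) := by
            rw [Real.rpow_natCast]; push_cast; ring
        _ ≤ (2 : ℝ) ^ ((L : ℝ) * ((1 + ε) * (m : ℕ))) :=
            (Real.rpow_le_rpow_left_iff one_lt_two).mpr hmD
        _ = ((2 : ℝ) ^ ((L : ℕ) : ℝ)) ^ ((1 + ε) * (m : ℕ)) := by
            rw [← Real.rpow_mul (by norm_num)]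
        _ = ((2 ^ L : ℕ) : ℝ) ^ ((1 + ε) * (m : ℕ)) := by
            rw [Real.rpow_natCast]; push_cast; ring
        _ ≤ ((m : ℕ) : ℝ) ^ ((1 + ε) * (m : ℕ)) :=
            Real.rpow_le_rpow h2L hbase hexp0
    calc (Fk P k : ℝ) ≤ ((2 ^ (m * D) : ℕ) : ℝ) := Nat.cast_le.mpr hFk
      _ ≤ ((m : ℕ) : ℝ) ^ ((1 + ε) * (m : ℕ)) := hcast
      _ ≤ C * ((m : ℕ) : ℝ) ^ ((1 + ε) * (m : ℕ)) :=
          le_mul_of_one_le_left hRHS0 hC1
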